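/- Let ρ be a density matrix on H and σ_n a density matrix on H^{⊗n}, λ ∈ ℝ, s ∈ (0,1), and let M := {ρ^{⊗n} - 2^λ σ_n}₊ be the projector onto the positive part of ρ^{⊗n} - 2^λ σ_n. Then tr[(1-M)ρ^{⊗n}] ≤ 2^{(1-s)(λ - D_s(ρ^{⊗n}‖σ_n))} and tr[M σ_n] ≤ 2^{-sλ - (1-s) D_s(ρ^{⊗n}‖σ_n)}. -/

import Mathlib

noncomputable section
open scoped BigOperators ComplexOrder

variable {n : Type*} [Fintype n] [DecidableEq n]

/-- A density matrix: positive semidefinite with trace one. -/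
def IsDensity (ρ : Matrix n n ℂ) : Prop := ρ.PosSemidef ∧ ρ.trace = 1

/-- Apply a real function to a Hermitian matrix via the functional calculus
(junk value `0` if the matrix is not Hermitian). -/
noncomputable def matFun (A : Matrix n n ℂ) (f : ℝ → ℝ) : Matrix n n ℂ :=
  if h : A.IsHermitian then h.cfc f else 0

/-- Fractional matrix power `X^s` via functional calculus (on the support; `0^s = 0`). -/
noncomputable def mpow (A : Matrix n n ℂ) (s : ℝ) : Matrix n n ℂ :=
  matFun A (fun x => x ^ s)

/-- Projector onto the eigenspace of strictly positive eigenvalues of `A`. -/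
noncomputable def posProj (A : Matrix n n ℂ) : Matrix n n ℂ :=
  matFun A (fun x => if 0 < x then 1 else 0)

/-- Petz divergence with logarithm base 2: `D_s(ρ‖σ) = (1/(s-1)) log₂ tr[ρ^s σ^{1-s}]`. -/
noncomputable def petzD2 (s : ℝ) (ρ σ : Matrix n n ℂ) : ℝ :=
  (1 / (s - 1)) * Real.logb 2 (((mpow ρ s * mpow σ (1 - s)).trace).re)

/-- `k`-fold tensor (Kronecker) power of a matrix. -/
noncomputable def tpow {d : ℕ} (ρ : Matrix (Fin d) (Fin d) ℂ) (k : ℕ) :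
    Matrix (Fin k → Fin d) (Fin k → Fin d) ℂ :=
  Matrix.of fun x y => ∏ i, ρ (x i) (y i)

section AuxNeymanPearson

set_option linter.unusedSectionVars false
set_option linter.unusedVariables false
open Matrix

variable {N : Type*} [Fintype N] [DecidableEq N]

/-- Conjugation of a real diagonal matrix by `U`. -/
def cnj (U : Matrix N N ℂ) (d : N → ℝ) : Matrix N N ℂ :=
  U * Matrix.diagonal (fun i => (d i : ℂ)) * Uᴴ

lemma cnj_isHermitian (U : Matrix N N ℂ) (d : N → ℝ) : (cnj U d).IsHermitian := by
  unfold cnj Matrix.IsHermitian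
  rw [conjTranspose_mul, conjTranspose_mul, conjTranspose_conjTranspose,
    diagonal_conjTranspose, mul_assoc]
  congr 2
  simp [Pi.star_def]

lemma cnj_mul {U : Matrix N N ℂ} (hU : Uᴴ * U = 1) (d e : N → ℝ) :
    cnj U d * cnj U e = cnj U (d * e) := by
  unfold cnj
  rw [show U * diagonal (fun i => (d i : ℂ)) * Uᴴ * (U * diagonal (fun i => (e i : ℂ)) * Uᴴ)
      = U * (diagonal (fun i => (d i : ℂ)) * (Uᴴ * U) * diagonal (fun i => (e i : ℂ))) * Uᴴ by
    simp only [mul_assoc], hU, mul_one, diagonal_mul_diagonal]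
  simp [Pi.mul_def]

lemma cnj_add (U : Matrix N N ℂ) (d e : N → ℝ) : cnj U (d + e) = cnj U d + cnj U e := by
  unfold cnj
  rw [show diagonal (fun i => ((d + e) i : ℂ)) = diagonal (fun i => (d i : ℂ)) + diagonal (fun i => (e i : ℂ)) by
    ext i j; by_cases h : i = j <;> simp [Matrix.diagonal_apply, h]]
  rw [mul_add, add_mul]

lemma cnj_smul (U : Matrix N N ℂ) (c : ℝ) (d : N → ℝ) :
    cnj U (fun i => c * d i) = (c : ℂ) • cnj U d := by
  unfold cnj
  rw [show diagonal (fun i => ((c * d i : ℝ) : ℂ)) = (c:ℂ) • diagonal (fun i => (d i : ℂ)) by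
    ext i j; by_cases h : i = j <;> simp [Matrix.diagonal_apply, h, mul_comm]]
  simp [Matrix.mul_smul, Matrix.smul_mul]

lemma cnj_sub (U : Matrix N N ℂ) (d e : N → ℝ) : cnj U (d - e) = cnj U d - cnj U e := by
  unfold cnj
  rw [show diagonal (fun i => ((d - e) i : ℂ)) = diagonal (fun i => (d i : ℂ)) - diagonal (fun i => (e i : ℂ)) by
    ext i j; by_cases h : i = j <;> simp [Matrix.diagonal_apply, h]]
  rw [mul_sub, sub_mul]

lemma cnj_const {U : Matrix N N ℂ} (hU' : U * Uᴴ = 1) (c : ℝ) :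
    cnj U (fun _ => c) = (c : ℂ) • 1 := by
  unfold cnj
  rw [show diagonal (fun _ : N => ((c:ℝ) : ℂ)) = (c:ℂ) • 1 by simp [Matrix.smul_one_eq_diagonal]]
  rw [Matrix.mul_smul, Matrix.smul_mul, mul_one, hU']

lemma cnj_one {U : Matrix N N ℂ} (hU' : U * Uᴴ = 1) : cnj U 1 = 1 := by
  have := cnj_const hU' 1
  simpa [Pi.one_def] using this

lemma cnj_congr (U : Matrix N N ℂ) {d e : N → ℝ} (h : ∀ i, d i = e i) : cnj U d = cnj U e := by
  have : d = e := funext h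
  rw [this]

set_option linter.unusedSectionVars false


lemma dot_star_mulVec (U : Matrix N N ℂ) (z v : N → ℂ) :
    star v ⬝ᵥ (U *ᵥ z) = star (Uᴴ *ᵥ v) ⬝ᵥ z := by
  simp only [dotProduct, Matrix.mulVec, dotProduct, Pi.star_apply,
    Matrix.conjTranspose_apply, Finset.mul_sum, Finset.sum_mul]
  rw [Finset.sum_comm]
  refine Finset.sum_congr rfl fun j _ => ?_
  rw [star_sum, Finset.sum_mul]
  refine Finset.sum_congr rfl fun i _ => ?_
  simp only [star_mul', star_star]
  ring


lemma quadform_cnj (U : Matrix N N ℂ) (d : N → ℝ) (v : N → ℂ) :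
    star v ⬝ᵥ (cnj U d *ᵥ v) =
      ((∑ i, d i * Complex.normSq ((Uᴴ *ᵥ v) i) : ℝ) : ℂ) := by
  set w := Uᴴ *ᵥ v with hw
  unfold cnj
  rw [← Matrix.mulVec_mulVec, ← Matrix.mulVec_mulVec, dot_star_mulVec, ← hw]
  push_cast
  simp only [Matrix.mulVec_diagonal, dotProduct, Pi.star_apply]
  refine Finset.sum_congr rfl fun i _ => ?_
  rw [Complex.normSq_eq_conj_mul_self]
  simp only [RCLike.star_def]
  ring

lemma quadform_cnj_re (U : Matrix N N ℂ) (d : N → ℝ) (v : N → ℂ) :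
    (star v ⬝ᵥ (cnj U d *ᵥ v)).re = ∑ i, d i * Complex.normSq ((Uᴴ *ᵥ v) i) := by
  rw [quadform_cnj]; exact Complex.ofReal_re _

lemma cnj_posSemidef {U : Matrix N N ℂ} (d : N → ℝ) (hd : ∀ i, 0 ≤ d i) :
    (cnj U d).PosSemidef := by
  refine Matrix.PosSemidef.of_dotProduct_mulVec_nonneg (cnj_isHermitian U d) fun v => ?_
  rw [quadform_cnj]
  rw [Complex.zero_le_real]
  exact Finset.sum_nonneg fun i _ => mul_nonneg (hd i) (Complex.normSq_nonneg _)

lemma cnj_posSemidef_rev {U : Matrix N N ℂ} (hU : Uᴴ * U = 1) {d : N → ℝ}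
    (h : (cnj U d).PosSemidef) (i : N) : 0 ≤ d i := by
  have h2 := h.dotProduct_mulVec_nonneg (U *ᵥ Pi.single i 1)
  rw [quadform_cnj] at h2
  have hw : Uᴴ *ᵥ (U *ᵥ Pi.single i 1) = Pi.single i 1 := by
    rw [Matrix.mulVec_mulVec, hU, Matrix.one_mulVec]
  rw [hw, Complex.zero_le_real] at h2
  have : ∑ j, d j * Complex.normSq ((Pi.single i 1 : N → ℂ) j) = d i := by
    rw [Finset.sum_eq_single i]
    · simp
    · intro j _ hj; simp [Pi.single_apply, hj]
    · simp
  linarith [this ▸ h2]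

lemma cnj_trace {U : Matrix N N ℂ} (hU : Uᴴ * U = 1) (d : N → ℝ) :
    (cnj U d).trace = ((∑ i, d i : ℝ) : ℂ) := by
  unfold cnj
  rw [Matrix.trace_mul_cycle, hU, one_mul, Matrix.trace_diagonal]
  push_cast; rfl

lemma cnj_aeval {U : Matrix N N ℂ} (hU : Uᴴ * U = 1) (hU' : U * Uᴴ = 1) (d : N → ℝ)
    (p : Polynomial ℝ) :
    cnj U (fun i => p.eval (d i)) = Polynomial.aeval (cnj U d) p := by
  induction p using Polynomial.induction_on with
  | C a =>
    rw [Polynomial.aeval_C]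
    simp only [Polynomial.eval_C]
    rw [cnj_const hU' a, Algebra.algebraMap_eq_smul_one]
    ext i j
    simp [Complex.real_smul]
  | add p q hp hq =>
    have : (fun i => (p + q).eval (d i)) = (fun i => p.eval (d i)) + (fun i => q.eval (d i)) := by
      funext i; simp
    rw [this, cnj_add, hp, hq, map_add]
  | monomial n a ih =>
    have h1 : (fun i => (Polynomial.C a * Polynomial.X ^ (n + 1)).eval (d i))
        = (fun i => (Polynomial.C a * Polynomial.X ^ n).eval (d i)) * d := by
      funext i; simp [pow_succ]; ring
    rw [h1, ← cnj_mul hU, ih]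
    have h2 : Polynomial.C a * Polynomial.X ^ (n + 1)
        = (Polynomial.C a * Polynomial.X ^ n) * Polynomial.X := by ring
    rw [h2]
    simp only [_root_.map_mul, Polynomial.aeval_X]

lemma matFun_cnj {U : Matrix N N ℂ} (hU : Uᴴ * U = 1) (hU' : U * Uᴴ = 1) (d : N → ℝ)
    (f : ℝ → ℝ) :
    matFun (cnj U d) f = cnj U (fun i => f (d i)) := by
  have hA : (cnj U d).IsHermitian := cnj_isHermitian U d
  set U0 := (hA.eigenvectorUnitary : Matrix N N ℂ) with hU0def
  set E := hA.eigenvalues with hEdef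
  have hU0 : U0ᴴ * U0 = 1 := by
    rw [← Matrix.star_eq_conjTranspose]
    exact Unitary.star_mul_self_of_mem hA.eigenvectorUnitary.2
  have hU0' : U0 * U0ᴴ = 1 := by
    rw [← Matrix.star_eq_conjTranspose]
    exact Unitary.mul_star_self_of_mem hA.eigenvectorUnitary.2
  have hspec : cnj U d = cnj U0 E := by
    conv_lhs => rw [hA.spectral_theorem]
    rfl
  have hmf : matFun (cnj U d) f = cnj U0 (fun i => f (E i)) := by
    unfold matFun
    rw [dif_pos hA]
    rfl
  -- interpolation polynomial
  set s : Finset ℝ := Finset.univ.image d ∪ Finset.univ.image E with hsdef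
  set p : Polynomial ℝ := Lagrange.interpolate s id f with hpdef
  have hinj : Set.InjOn (id : ℝ → ℝ) ↑s := Set.injOn_id _
  have hp : ∀ x ∈ s, p.eval x = f x := fun x hx => by
    exact Lagrange.eval_interpolate_at_node f hinj hx
  have hpd : ∀ i, p.eval (d i) = f (d i) := fun i =>
    hp _ (Finset.mem_union_left _ (Finset.mem_image_of_mem d (Finset.mem_univ i)))
  have hpE : ∀ i, p.eval (E i) = f (E i) := fun i =>
    hp _ (Finset.mem_union_right _ (Finset.mem_image_of_mem E (Finset.mem_univ i)))
  calc matFun (cnj U d) f = cnj U0 (fun i => f (E i)) := hmf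
    _ = cnj U0 (fun i => p.eval (E i)) := (cnj_congr _ fun i => (hpE i).symm)
    _ = Polynomial.aeval (cnj U0 E) p := cnj_aeval hU0 hU0' E p
    _ = Polynomial.aeval (cnj U d) p := by rw [hspec]
    _ = cnj U (fun i => p.eval (d i)) := (cnj_aeval hU hU' d p).symm
    _ = cnj U (fun i => f (d i)) := cnj_congr _ hpd

lemma isHermitian_exists_cnj {A : Matrix N N ℂ} (hA : A.IsHermitian) :
    ∃ (U : Matrix N N ℂ) (d : N → ℝ), Uᴴ * U = 1 ∧ U * Uᴴ = 1 ∧ A = cnj U d := by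
  refine ⟨(hA.eigenvectorUnitary : Matrix N N ℂ), hA.eigenvalues, ?_, ?_, ?_⟩
  · rw [← Matrix.star_eq_conjTranspose]
    exact Unitary.star_mul_self_of_mem hA.eigenvectorUnitary.2
  · rw [← Matrix.star_eq_conjTranspose]
    exact Unitary.mul_star_self_of_mem hA.eigenvectorUnitary.2
  · conv_lhs => rw [hA.spectral_theorem]
    rfl

lemma posSemidef_diag_nonneg {A : Matrix N N ℂ} (hA : A.PosSemidef) (i : N) :
    0 ≤ A i i := by
  have := hA.dotProduct_mulVec_nonneg (Pi.single i 1)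
  have h1 : star (Pi.single i 1 : N → ℂ) ⬝ᵥ (A *ᵥ Pi.single i 1) = A i i := by
    simp [dotProduct, Matrix.mulVec, Pi.single_apply, apply_ite, Finset.mul_sum]
  rwa [h1] at this

lemma posSemidef_trace_re_nonneg {A : Matrix N N ℂ} (hA : A.PosSemidef) :
    0 ≤ (A.trace).re := by
  have : (0:ℂ) ≤ A.trace := Finset.sum_nonneg fun i _ => posSemidef_diag_nonneg hA i
  exact (Complex.le_def.mp this).1

lemma psd_exists_factor {A : Matrix N N ℂ} (hA : A.PosSemidef) :
    ∃ B : Matrix N N ℂ, A = Bᴴ * B := by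
  obtain ⟨U, d, h1, h2, h3⟩ := isHermitian_exists_cnj hA.1
  have hd : ∀ i, 0 ≤ d i := fun i => cnj_posSemidef_rev h1 (h3 ▸ hA) i
  refine ⟨cnj U (fun i => Real.sqrt (d i)), ?_⟩
  rw [(cnj_isHermitian U _).eq, cnj_mul h1, h3]
  exact cnj_congr _ fun i => (Real.mul_self_sqrt (hd i)).symm

lemma trace_mul_psd_re_nonneg {A B : Matrix N N ℂ} (hA : A.PosSemidef) (hB : B.PosSemidef) :
    0 ≤ ((A * B).trace).re := by
  obtain ⟨C, rfl⟩ := psd_exists_factor hA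
  rw [mul_assoc, Matrix.trace_mul_comm]
  exact posSemidef_trace_re_nonneg (hB.mul_mul_conjTranspose_same C)

lemma trace_mul_mono_right {A B C : Matrix N N ℂ} (hA : A.PosSemidef)
    (h : (C - B).PosSemidef) : ((A * B).trace).re ≤ ((A * C).trace).re := by
  have h1 := trace_mul_psd_re_nonneg hA h
  rw [mul_sub, Matrix.trace_sub, Complex.sub_re] at h1
  linarith

section ScalarIntegral
open MeasureTheory Set Real

/-- Integrability on `(0,∞)` by comparison with `t^(r-1)` near 0 and `c * t^(r-2)` near ∞. -/
lemma integrableOn_aux {r c : ℝ} (hr : r ∈ Set.Ioo (0:ℝ) 1) {F : ℝ → ℝ}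
    (hF : ContinuousOn F (Set.Ioi 0))
    (h1 : ∀ t ∈ Set.Ioc (0:ℝ) 1, |F t| ≤ t ^ (r - 1))
    (h2 : ∀ t ∈ Set.Ioi (1:ℝ), |F t| ≤ c * t ^ (r - 2)) :
    IntegrableOn F (Set.Ioi (0:ℝ)) := by
  have hmeas : AEStronglyMeasurable F (volume.restrict (Set.Ioi (0:ℝ))) :=
    hF.aestronglyMeasurable measurableSet_Ioi
  have hsplit : Set.Ioi (0:ℝ) = Set.Ioc 0 1 ∪ Set.Ioi 1 := by
    rw [Set.Ioc_union_Ioi_eq_Ioi]; norm_num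
  rw [hsplit]
  refine IntegrableOn.union ?_ ?_
  · have hint : IntegrableOn (fun t : ℝ => t ^ (r - 1)) (Set.Ioc (0:ℝ) 1) :=
      (intervalIntegrable_iff_integrableOn_Ioc_of_le (by norm_num)).mp
        (intervalIntegral.intervalIntegrable_rpow' (by linarith [hr.1]))
    exact Integrable.mono hint (hmeas.mono_set (by rw [hsplit]; exact Set.subset_union_left))
      (by
        filter_upwards [ae_restrict_mem measurableSet_Ioc] with t ht
        rw [Real.norm_eq_abs, Real.norm_eq_abs]
        refine (h1 t ht).trans (le_abs_self _))
  · have hint : IntegrableOn (fun t : ℝ => c * t ^ (r - 2)) (Set.Ioi (1:ℝ)) :=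
      (integrableOn_Ioi_rpow_of_lt (by linarith [hr.2]) one_pos).const_mul c
    exact Integrable.mono hint (hmeas.mono_set (by rw [hsplit]; exact Set.subset_union_right))
      (by
        filter_upwards [ae_restrict_mem measurableSet_Ioi] with t ht
        rw [Real.norm_eq_abs, Real.norm_eq_abs]
        refine (h2 t ht).trans (le_abs_self _))

/-- Base integrand. -/
def baseIg (r t : ℝ) : ℝ := t ^ (r - 1) / (1 + t)

lemma baseIg_contOn {r : ℝ} : ContinuousOn (baseIg r) (Set.Ioi 0) := by
  intro t ht
  have h1 : ContinuousAt (fun t : ℝ => t ^ (r - 1)) t :=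
    Real.continuousAt_rpow_const t (r - 1) (Or.inl (ne_of_gt ht))
  have h2 : ContinuousAt (fun t : ℝ => 1 + t) t := by fun_prop
  have ht0 : (0:ℝ) < t := ht
  exact ((h1.div h2 (by positivity)).continuousWithinAt)

lemma baseIg_integrable {r : ℝ} (hr : r ∈ Set.Ioo (0:ℝ) 1) :
    IntegrableOn (baseIg r) (Set.Ioi (0:ℝ)) := by
  refine integrableOn_aux (c := 1) hr baseIg_contOn (fun t ht => ?_) (fun t ht => ?_)
  · have ht0 : (0:ℝ) < t := ht.1
    have : baseIg r t ≤ t ^ (r - 1) := by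
      rw [baseIg, div_le_iff₀ (by positivity)]
      nlinarith [Real.rpow_nonneg ht0.le (r - 1)]
    rw [abs_of_nonneg (show (0:ℝ) ≤ baseIg r t from div_nonneg (Real.rpow_nonneg ht0.le _) (by linarith))]
    exact this
  · have ht1 : (1:ℝ) < t := ht
    have ht0 : (0:ℝ) < t := lt_trans one_pos ht1
    have : baseIg r t ≤ 1 * t ^ (r - 2) := by
      rw [baseIg, one_mul, div_le_iff₀ (by positivity)]
      rw [show r - 1 = (r - 2) + 1 by ring, Real.rpow_add ht0, Real.rpow_one]
      nlinarith [Real.rpow_pos_of_pos ht0 (r - 2)]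
    rw [abs_of_nonneg (show (0:ℝ) ≤ baseIg r t from div_nonneg (Real.rpow_nonneg ht0.le _) (by linarith))]
    exact this

/-- The normalization constant. -/
def Inorm (r : ℝ) : ℝ := ∫ t in Set.Ioi (0:ℝ), baseIg r t

lemma Inorm_pos {r : ℝ} (hr : r ∈ Set.Ioo (0:ℝ) 1) : 0 < Inorm r := by
  rw [Inorm, setIntegral_pos_iff_support_of_nonneg_ae ?_ (baseIg_integrable hr)]
  · have : Set.Ioi (0:ℝ) ⊆ Function.support (baseIg r) ∩ Set.Ioi 0 := by
      intro t ht
      refine ⟨?_, ht⟩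
      have ht0 : (0:ℝ) < t := ht
      simp only [Function.mem_support, baseIg]
      positivity
    exact lt_of_lt_of_le (by simp) (measure_mono this)
  · filter_upwards [ae_restrict_mem measurableSet_Ioi] with t ht
    have ht0 : (0:ℝ) < t := ht
    have : 0 ≤ baseIg r t := by rw [baseIg]; positivity
    exact this

/-- eigenvalue integrand -/
def eigIg (r x t : ℝ) : ℝ := t ^ (r - 1) * (x / (x + t))

lemma eigIg_integrable {r x : ℝ} (hr : r ∈ Set.Ioo (0:ℝ) 1) (hx : 0 ≤ x) :
    IntegrableOn (eigIg r x) (Set.Ioi (0:ℝ)) := by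
  rcases eq_or_lt_of_le hx with h | hxp
  · have : eigIg r x = fun _ => 0 := by
      funext t; rw [eigIg, ← h]; simp
    rw [this]; exact integrableOn_zero
  refine integrableOn_aux (c := x) hr ?_ (fun t ht => ?_) (fun t ht => ?_)
  · intro t ht
    have h1 : ContinuousAt (fun t : ℝ => t ^ (r - 1)) t :=
      Real.continuousAt_rpow_const t (r - 1) (Or.inl (ne_of_gt ht))
    have ht0 : (0:ℝ) < t := ht
    have h2 : ContinuousAt (fun t : ℝ => x / (x + t)) t := by
      apply ContinuousAt.div (by fun_prop) (by fun_prop)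
      positivity
    exact (h1.mul h2).continuousWithinAt
  · have ht0 : (0:ℝ) < t := ht.1
    have hfrac : x / (x + t) ≤ 1 := by
      rw [div_le_one (by positivity)]; linarith
    have : eigIg r x t ≤ t ^ (r - 1) := by
      rw [eigIg]
      nlinarith [Real.rpow_nonneg ht0.le (r - 1), Real.rpow_pos_of_pos ht0 (r - 1),
        div_nonneg hxp.le (by positivity : (0:ℝ) ≤ x + t)]
    rw [abs_of_nonneg]
    · exact this
    · rw [eigIg]
      have := div_nonneg hxp.le (by positivity : (0:ℝ) ≤ x + t)
      positivity
  · have ht1 : (1:ℝ) < t := ht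
    have ht0 : (0:ℝ) < t := lt_trans one_pos ht1
    have hfrac : x / (x + t) ≤ x / t := by
      rw [div_le_div_iff₀ (by positivity) ht0]
      nlinarith
    have hpow : t ^ (r - 1) / t = t ^ (r - 2) := by
      have h := Real.rpow_add ht0 (r - 2) 1
      rw [show r - 2 + 1 = r - 1 by ring, Real.rpow_one] at h
      rw [h]
      field_simp
    have hb : eigIg r x t ≤ x * t ^ (r - 2) := by
      calc eigIg r x t ≤ t ^ (r - 1) * (x / t) :=
            mul_le_mul_of_nonneg_left hfrac (Real.rpow_nonneg ht0.le _)
        _ = x * (t ^ (r - 1) / t) := by ring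
        _ = x * t ^ (r - 2) := by rw [hpow]
    rw [abs_of_nonneg]
    · exact hb
    · rw [eigIg]
      have := div_nonneg hxp.le (by positivity : (0:ℝ) ≤ x + t)
      positivity
end ScalarIntegral

section ScalarIntegral2
open MeasureTheory Set Real

lemma eigIg_integral {r x : ℝ} (hr : r ∈ Set.Ioo (0:ℝ) 1) (hx : 0 ≤ x) :
    ∫ t in Set.Ioi (0:ℝ), eigIg r x t = x ^ r * Inorm r := by
  rcases eq_or_lt_of_le hx with h | hxp
  · rw [← h]
    have h1 : ∀ t, eigIg r 0 t = 0 := by intro t; rw [eigIg]; simp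
    simp only [h1]
    rw [Real.zero_rpow (ne_of_gt hr.1)]
    simp
  · -- substitution t = x * u
    have hsub := MeasureTheory.integral_comp_mul_left_Ioi (eigIg r x) 0 hxp
    rw [mul_zero] at hsub
    have hcongr : ∫ u in Set.Ioi (0:ℝ), eigIg r x (x * u)
        = ∫ u in Set.Ioi (0:ℝ), x ^ (r - 1) * baseIg r u := by
      refine setIntegral_congr_fun measurableSet_Ioi (fun u hu => ?_)
      have hu0 : (0:ℝ) < u := hu
      rw [eigIg, baseIg, Real.mul_rpow hxp.le hu0.le]
      rw [show x + x * u = x * (1 + u) by ring]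
      rw [div_mul_eq_div_div_swap]
      field_simp
    rw [hcongr, MeasureTheory.integral_const_mul] at hsub
    -- hsub : x^(r-1) * Inorm r = x⁻¹ • ∫ t in Ioi 0, eigIg r x t
    rw [smul_eq_mul] at hsub
    have : ∫ t in Set.Ioi (0:ℝ), eigIg r x t = x * (x ^ (r - 1) * Inorm r) := by
      rw [show Inorm r = ∫ t in Set.Ioi (0:ℝ), baseIg r t from rfl]
      rw [hsub]
      field_simp
    rw [this]
    have hxr : x * x ^ (r - 1) = x ^ r := by
      have h := Real.rpow_add hxp 1 (r - 1)
      rw [show (1:ℝ) + (r - 1) = r by ring, Real.rpow_one] at h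
      rw [← h]
    rw [← mul_assoc, hxr]

end ScalarIntegral2

lemma posSemidef_exists_cnj {A : Matrix N N ℂ} (hA : A.PosSemidef) :
    ∃ (U : Matrix N N ℂ) (d : N → ℝ), Uᴴ * U = 1 ∧ U * Uᴴ = 1 ∧ A = cnj U d ∧ ∀ i, 0 ≤ d i := by
  obtain ⟨U, d, h1, h2, h3⟩ := isHermitian_exists_cnj hA.1
  exact ⟨U, d, h1, h2, h3, fun i => cnj_posSemidef_rev h1 (h3 ▸ hA) i⟩

lemma cnj_posDef {U : Matrix N N ℂ} (hU : Uᴴ * U = 1) (hU' : U * Uᴴ = 1) {d : N → ℝ}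
    (hd : ∀ i, 0 < d i) : (cnj U d).PosDef := by
  refine Matrix.PosDef.of_dotProduct_mulVec_pos (cnj_isHermitian U d) fun v hv => ?_
  rw [quadform_cnj]
  have hw : Uᴴ *ᵥ v ≠ 0 := by
    intro h
    apply hv
    have : U *ᵥ (Uᴴ *ᵥ v) = v := by rw [Matrix.mulVec_mulVec, hU', Matrix.one_mulVec]
    rw [h, Matrix.mulVec_zero] at this
    exact this.symm
  obtain ⟨i, hi⟩ := Function.ne_iff.mp hw
  rw [show (0:ℂ) = ((0:ℝ):ℂ) by norm_num, Complex.real_lt_real]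
  refine Finset.sum_pos' (fun j _ => mul_nonneg (hd j).le (Complex.normSq_nonneg _)) ⟨i, Finset.mem_univ i, ?_⟩
  have : 0 < Complex.normSq ((Uᴴ *ᵥ v) i) := by
    rw [Complex.normSq_pos]
    simpa using hi
  exact mul_pos (hd i) this

lemma cnj_posDef_rev {U : Matrix N N ℂ} (hU : Uᴴ * U = 1) (hU' : U * Uᴴ = 1) {d : N → ℝ}
    (h : (cnj U d).PosDef) (i : N) : 0 < d i := by
  have hv : U *ᵥ Pi.single i 1 ≠ 0 := by
    intro hc
    have : Uᴴ *ᵥ (U *ᵥ Pi.single i 1) = Pi.single i 1 := by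
      rw [Matrix.mulVec_mulVec, hU, Matrix.one_mulVec]
    rw [hc, Matrix.mulVec_zero] at this
    have := congrFun this i
    simp at this
  have h2 := h.dotProduct_mulVec_pos hv
  rw [quadform_cnj] at h2
  have hw : Uᴴ *ᵥ (U *ᵥ Pi.single i 1) = Pi.single i 1 := by
    rw [Matrix.mulVec_mulVec, hU, Matrix.one_mulVec]
  rw [hw, show (0:ℂ) = ((0:ℝ):ℂ) by norm_num, Complex.real_lt_real] at h2
  have : ∑ j, d j * Complex.normSq ((Pi.single i 1 : N → ℂ) j) = d i := by
    rw [Finset.sum_eq_single i]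
    · simp
    · intro j _ hj; simp [Pi.single_apply, hj]
    · simp
  linarith [this ▸ h2]

lemma mul_mul_herm_posSemidef {A R : Matrix N N ℂ} (hA : A.PosSemidef)
    (hR : R.IsHermitian) : (R * A * R).PosSemidef := by
  have := hA.mul_mul_conjTranspose_same R
  rwa [hR.eq] at this

/-- Antitonicity of the resolvent: if `X ≤ Y` (PSD order) then `(Y+t)⁻¹ ≤ (X+t)⁻¹`. -/
lemma resolv_antitone {X Y : Matrix N N ℂ} (hX : X.PosSemidef) (hY : Y.PosSemidef)
    (hXY : (Y - X).PosSemidef) {t : ℝ} (ht : 0 < t) :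
    (matFun X (fun x => (x + t)⁻¹) - matFun Y (fun x => (x + t)⁻¹)).PosSemidef := by
  obtain ⟨U, dX, hU1, hU2, hXeq, hdX⟩ := posSemidef_exists_cnj hX
  obtain ⟨V, dY, hV1, hV2, hYeq, hdY⟩ := posSemidef_exists_cnj hY
  set R : Matrix N N ℂ := cnj V (fun i => (Real.sqrt (dY i + t))⁻¹) with hRdef
  set R' : Matrix N N ℂ := cnj V (fun i => Real.sqrt (dY i + t)) with hR'def
  have hsq : ∀ i, 0 < dY i + t := fun i => by linarith [hdY i]
  have hsqrt : ∀ i, 0 < Real.sqrt (dY i + t) := fun i => Real.sqrt_pos.mpr (hsq i)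
  have hRR' : R * R' = 1 := by
    rw [hRdef, hR'def, cnj_mul hV1, show ((fun i => (Real.sqrt (dY i + t))⁻¹) * fun i => Real.sqrt (dY i + t)) = 1 by
      funext i; simp [Pi.mul_apply]; exact inv_mul_cancel₀ (hsqrt i).ne', cnj_one hV2]
  have hR'R : R' * R = 1 := by
    rw [hRdef, hR'def, cnj_mul hV1, show ((fun i => Real.sqrt (dY i + t)) * fun i => (Real.sqrt (dY i + t))⁻¹) = 1 by
      funext i; simp [Pi.mul_apply]; exact mul_inv_cancel₀ (hsqrt i).ne', cnj_one hV2]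
  have hRherm : R.IsHermitian := cnj_isHermitian _ _
  have hR'herm : R'.IsHermitian := cnj_isHermitian _ _
  set P : Matrix N N ℂ := cnj U (fun i => dX i + t) with hPdef
  set Q : Matrix N N ℂ := cnj V (fun i => dY i + t) with hQdef
  have hQP : Q - P = Y - X := by
    have h1 : P = X + (t:ℂ) • 1 := by
      rw [hPdef, show (fun i => dX i + t) = dX + (fun _ => t) from rfl, cnj_add, cnj_const hU2, hXeq]
    have h2 : Q = Y + (t:ℂ) • 1 := by
      rw [hQdef, show (fun i => dY i + t) = dY + (fun _ => t) from rfl, cnj_add, cnj_const hV2, hYeq]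
    rw [h1, h2]; abel
  set S : Matrix N N ℂ := R * P * R with hSdef
  have hSherm : S.IsHermitian := by
    unfold Matrix.IsHermitian
    rw [hSdef, conjTranspose_mul, conjTranspose_mul, hRherm.eq, (cnj_isHermitian U _).eq]
    rw [mul_assoc]
  have hRQR : R * Q * R = 1 := by
    rw [hRdef, hQdef, cnj_mul hV1, cnj_mul hV1]
    rw [show ((fun i => (Real.sqrt (dY i + t))⁻¹) * (fun i => dY i + t) * fun i => (Real.sqrt (dY i + t))⁻¹) = 1 by
      funext i
      simp only [Pi.mul_apply, Pi.one_apply]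
      rw [show (Real.sqrt (dY i + t))⁻¹ * (dY i + t) * (Real.sqrt (dY i + t))⁻¹
          = (dY i + t) / (Real.sqrt (dY i + t) * Real.sqrt (dY i + t)) by ring]
      rw [Real.mul_self_sqrt (hsq i).le, div_self (hsq i).ne']]
    exact cnj_one hV2
  have h1S : (1 - S).PosSemidef := by
    have : 1 - S = R * (Y - X) * R := by
      rw [← hQP, hSdef, ← hRQR]
      rw [mul_sub, sub_mul]
    rw [this]
    exact mul_mul_herm_posSemidef hXY hRherm
  have hPpd : P.PosDef := cnj_posDef hU1 hU2 (fun i => by linarith [hdX i])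
  have hSpd : S.PosDef := by
    refine Matrix.PosDef.of_dotProduct_mulVec_pos hSherm fun v hv => ?_
    have hRv : R *ᵥ v ≠ 0 := by
      intro hc
      apply hv
      have : R' *ᵥ (R *ᵥ v) = v := by rw [Matrix.mulVec_mulVec, hR'R, Matrix.one_mulVec]
      rw [hc, Matrix.mulVec_zero] at this
      exact this.symm
    have hform : star v ⬝ᵥ (S *ᵥ v) = star (R *ᵥ v) ⬝ᵥ (P *ᵥ (R *ᵥ v)) := by
      rw [hSdef, ← Matrix.mulVec_mulVec, ← Matrix.mulVec_mulVec, dot_star_mulVec, hRherm.eq]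
    rw [hform]
    exact hPpd.dotProduct_mulVec_pos hRv
  obtain ⟨W, σ, hW1, hW2, hSeq⟩ := isHermitian_exists_cnj hSherm
  have hσpos : ∀ i, 0 < σ i := fun i => cnj_posDef_rev hW1 hW2 (hSeq ▸ hSpd) i
  have hσle : ∀ i, σ i ≤ 1 := by
    intro i
    have : (1:Matrix N N ℂ) - S = cnj W (1 - σ) := by rw [cnj_sub, ← hSeq, cnj_one hW2]
    have h := cnj_posSemidef_rev hW1 (this ▸ h1S) i
    simp only [Pi.sub_apply, Pi.one_apply] at h
    linarith
  set Sinv : Matrix N N ℂ := cnj W σ⁻¹ with hSinvdef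
  have hSSinv : S * Sinv = 1 := by
    rw [hSeq, hSinvdef, cnj_mul hW1, show (σ * σ⁻¹ : N → ℝ) = 1 by
      funext i; simp [Pi.mul_apply]; exact mul_inv_cancel₀ (hσpos i).ne', cnj_one hW2]
  -- matFun X = R * Sinv * R
  have hmfX : matFun X (fun x => (x + t)⁻¹) = cnj U (fun i => (dX i + t)⁻¹) := by
    rw [hXeq, matFun_cnj hU1 hU2]
  have hmfY : matFun Y (fun x => (x + t)⁻¹) = cnj V (fun i => (dY i + t)⁻¹) := by
    rw [hYeq, matFun_cnj hV1 hV2]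
  have hPinv1 : P * cnj U (fun i => (dX i + t)⁻¹) = 1 := by
    rw [hPdef, cnj_mul hU1, show ((fun i => dX i + t) * fun i => (dX i + t)⁻¹) = 1 by
      funext i; simp [Pi.mul_apply]; exact mul_inv_cancel₀ (ne_of_gt (by linarith [hdX i] : (0:ℝ) < dX i + t)), cnj_one hU2]
  have hPS : P = R' * S * R' := by
    rw [hSdef]
    rw [show R' * (R * P * R) * R' = (R' * R) * P * (R * R') by simp only [mul_assoc], hR'R, hRR',
      one_mul, mul_one]
  have hPinv2 : P * (R * Sinv * R) = 1 := by
    calc P * (R * Sinv * R) = (R' * S * R') * (R * Sinv * R) := by rw [← hPS]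
      _ = R' * (S * ((R' * R) * Sinv)) * R := by simp only [mul_assoc]
      _ = R' * (S * Sinv) * R := by rw [hR'R, one_mul]
      _ = R' * R := by rw [hSSinv, mul_one]
      _ = 1 := hR'R
  have huniq : cnj U (fun i => (dX i + t)⁻¹) = R * Sinv * R := by
    have hl : cnj U (fun i => (dX i + t)⁻¹) * P = 1 := mul_eq_one_comm.mp hPinv1
    calc cnj U (fun i => (dX i + t)⁻¹) = cnj U (fun i => (dX i + t)⁻¹) * (P * (R * Sinv * R)) := by
          rw [hPinv2, mul_one]
      _ = (cnj U (fun i => (dX i + t)⁻¹) * P) * (R * Sinv * R) := by rw [← mul_assoc]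
      _ = R * Sinv * R := by rw [hl, one_mul]
  have hRone : R * 1 * R = cnj V (fun i => (dY i + t)⁻¹) := by
    rw [mul_one, hRdef, cnj_mul hV1]
    refine cnj_congr _ fun i => ?_
    simp only [Pi.mul_apply]
    rw [← mul_inv, Real.mul_self_sqrt (hsq i).le]
  rw [hmfX, hmfY, huniq, ← hRone]
  have : R * Sinv * R - R * 1 * R = R * (Sinv - 1) * R := by
    rw [mul_sub, sub_mul]
  rw [this]
  refine mul_mul_herm_posSemidef ?_ hRherm
  have : Sinv - 1 = cnj W (σ⁻¹ - 1) := by rw [cnj_sub, hSinvdef, cnj_one hW2]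
  rw [this]
  refine cnj_posSemidef _ fun i => ?_
  simp only [Pi.sub_apply, Pi.inv_apply, Pi.one_apply]
  have h1 := mul_inv_cancel₀ (hσpos i).ne'
  nlinarith [inv_nonneg.mpr (hσpos i).le, hσle i, hσpos i]

lemma psd_form_re_nonneg {M : Matrix N N ℂ} (hM : M.PosSemidef) (v : N → ℂ) :
    0 ≤ (star v ⬝ᵥ (M *ᵥ v)).re :=
  (Complex.le_def.mp (hM.dotProduct_mulVec_nonneg v)).1

/-- Löwner–Heinz: `x ↦ x^r` is operator monotone for `r ∈ (0,1)`. -/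
lemma loewner_heinz {X Y : Matrix N N ℂ} (hX : X.PosSemidef) (hY : Y.PosSemidef)
    (hXY : (Y - X).PosSemidef) {r : ℝ} (hr : r ∈ Set.Ioo (0:ℝ) 1) :
    (mpow Y r - mpow X r).PosSemidef := by
  obtain ⟨U, dX, hU1, hU2, hXeq, hdX⟩ := posSemidef_exists_cnj hX
  obtain ⟨V, dY, hV1, hV2, hYeq, hdY⟩ := posSemidef_exists_cnj hY
  have hmX : mpow X r = cnj U (fun i => dX i ^ r) := by rw [mpow, hXeq, matFun_cnj hU1 hU2]
  have hmY : mpow Y r = cnj V (fun i => dY i ^ r) := by rw [mpow, hYeq, matFun_cnj hV1 hV2]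
  rw [hmX, hmY]
  refine Matrix.PosSemidef.of_dotProduct_mulVec_nonneg ((cnj_isHermitian _ _).sub (cnj_isHermitian _ _)) fun v => ?_
  rw [Matrix.sub_mulVec, dotProduct_sub, quadform_cnj, quadform_cnj,
    ← Complex.ofReal_sub, Complex.zero_le_real, sub_nonneg]
  set cX : N → ℝ := fun i => Complex.normSq ((Uᴴ *ᵥ v) i) with hcX
  set cY : N → ℝ := fun i => Complex.normSq ((Vᴴ *ᵥ v) i) with hcY
  have hcXn : ∀ i, 0 ≤ cX i := fun i => Complex.normSq_nonneg _
  have hcYn : ∀ i, 0 ≤ cY i := fun i => Complex.normSq_nonneg _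
  -- the two integrands
  set FX : ℝ → ℝ := fun t => ∑ i, cX i * eigIg r (dX i) t with hFX
  set FY : ℝ → ℝ := fun t => ∑ i, cY i * eigIg r (dY i) t with hFY
  have hFXint : MeasureTheory.IntegrableOn FX (Set.Ioi (0:ℝ)) :=
    MeasureTheory.integrable_finset_sum _ fun i _ =>
      ((eigIg_integrable hr (hdX i)).const_mul (cX i))
  have hFYint : MeasureTheory.IntegrableOn FY (Set.Ioi (0:ℝ)) :=
    MeasureTheory.integrable_finset_sum _ fun i _ =>
      ((eigIg_integrable hr (hdY i)).const_mul (cY i))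
  have hIX : ∫ t in Set.Ioi (0:ℝ), FX t = Inorm r * ∑ i, dX i ^ r * cX i := by
    rw [hFX, MeasureTheory.integral_finset_sum _ fun i _ =>
      ((eigIg_integrable hr (hdX i)).const_mul (cX i))]
    rw [Finset.mul_sum]
    refine Finset.sum_congr rfl fun i _ => ?_
    rw [MeasureTheory.integral_const_mul, eigIg_integral hr (hdX i)]
    ring
  have hIY : ∫ t in Set.Ioi (0:ℝ), FY t = Inorm r * ∑ i, dY i ^ r * cY i := by
    rw [hFY, MeasureTheory.integral_finset_sum _ fun i _ =>
      ((eigIg_integrable hr (hdY i)).const_mul (cY i))]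
    rw [Finset.mul_sum]
    refine Finset.sum_congr rfl fun i _ => ?_
    rw [MeasureTheory.integral_const_mul, eigIg_integral hr (hdY i)]
    ring
  -- pointwise comparison
  have hpt : ∀ t ∈ Set.Ioi (0:ℝ), FX t ≤ FY t := by
    intro t ht
    have ht0 : (0:ℝ) < t := ht
    have hresolv := resolv_antitone hX hY hXY ht0
    have hform := psd_form_re_nonneg hresolv v
    -- express FX, FY via quadratic forms
    have hfrac : ∀ (d : N → ℝ), (∀ i, 0 ≤ d i) →
        (fun i => d i / (d i + t)) = fun i => 1 - t * (d i + t)⁻¹ := by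
      intro d hd
      funext i
      have : 0 < d i + t := by linarith [hd i]
      field_simp
      ring
    have hX' : cnj U (fun i => dX i / (dX i + t))
        = 1 - (t:ℂ) • matFun X (fun x => (x + t)⁻¹) := by
      rw [hfrac dX hdX]
      have h1 : (fun i => 1 - t * (dX i + t)⁻¹) = (fun _ : N => (1:ℝ)) - fun i => t * (dX i + t)⁻¹ := rfl
      rw [h1, cnj_sub, cnj_const hU2, cnj_smul U t (fun i => (dX i + t)⁻¹)]
      rw [hXeq, matFun_cnj hU1 hU2]
      simp
    have hY' : cnj V (fun i => dY i / (dY i + t))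
        = 1 - (t:ℂ) • matFun Y (fun x => (x + t)⁻¹) := by
      rw [hfrac dY hdY]
      have h1 : (fun i => 1 - t * (dY i + t)⁻¹) = (fun _ : N => (1:ℝ)) - fun i => t * (dY i + t)⁻¹ := rfl
      rw [h1, cnj_sub, cnj_const hV2, cnj_smul V t (fun i => (dY i + t)⁻¹)]
      rw [hYeq, matFun_cnj hV1 hV2]
      simp
    have hFXt : FX t = t ^ (r - 1) *
        (star v ⬝ᵥ (cnj U (fun i => dX i / (dX i + t)) *ᵥ v)).re := by
      rw [quadform_cnj_re, hFX, Finset.mul_sum]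
      refine Finset.sum_congr rfl fun i _ => ?_
      rw [eigIg]; ring
    have hFYt : FY t = t ^ (r - 1) *
        (star v ⬝ᵥ (cnj V (fun i => dY i / (dY i + t)) *ᵥ v)).re := by
      rw [quadform_cnj_re, hFY, Finset.mul_sum]
      refine Finset.sum_congr rfl fun i _ => ?_
      rw [eigIg]; ring
    rw [hFXt, hFYt, hX', hY']
    refine mul_le_mul_of_nonneg_left ?_ (Real.rpow_nonneg ht0.le _)
    have hdiff : (1 - (t:ℂ) • matFun Y (fun x => (x + t)⁻¹))
        - (1 - (t:ℂ) • matFun X (fun x => (x + t)⁻¹))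
        = (t:ℂ) • (matFun X (fun x => (x + t)⁻¹) - matFun Y (fun x => (x + t)⁻¹)) := by
      rw [smul_sub]; abel
    have h2 : 0 ≤ (star v ⬝ᵥ (((t:ℂ) • (matFun X (fun x => (x + t)⁻¹)
        - matFun Y (fun x => (x + t)⁻¹))) *ᵥ v)).re := by
      rw [Matrix.smul_mulVec, dotProduct_smul]
      rw [smul_eq_mul]
      rw [show ((t:ℂ) * (star v ⬝ᵥ ((matFun X (fun x => (x + t)⁻¹)
        - matFun Y (fun x => (x + t)⁻¹)) *ᵥ v))).re
        = t * (star v ⬝ᵥ ((matFun X (fun x => (x + t)⁻¹)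
        - matFun Y (fun x => (x + t)⁻¹)) *ᵥ v)).re by
          rw [Complex.mul_re]; simp]
      exact mul_nonneg ht0.le hform
    have h3 := h2
    rw [← hdiff, Matrix.sub_mulVec, dotProduct_sub, Complex.sub_re] at h3
    linarith
  have hle : ∫ t in Set.Ioi (0:ℝ), FX t ≤ ∫ t in Set.Ioi (0:ℝ), FY t :=
    MeasureTheory.setIntegral_mono_on hFXint hFYint measurableSet_Ioi hpt
  rw [hIX, hIY] at hle
  have hI := Inorm_pos hr
  have := le_of_mul_le_mul_left hle hI
  calc ∑ i, dX i ^ r * cX i ≤ ∑ i, dY i ^ r * cY i := this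
    _ = ∑ i, dY i ^ r * cY i := rfl

lemma mpow_psd {X : Matrix N N ℂ} (hX : X.PosSemidef) (r : ℝ) : (mpow X r).PosSemidef := by
  obtain ⟨U, d, hU1, hU2, hXeq, hd⟩ := posSemidef_exists_cnj hX
  rw [mpow, hXeq, matFun_cnj hU1 hU2]
  exact cnj_posSemidef _ fun i => Real.rpow_nonneg (hd i) r

lemma mpow_mul_eq {X : Matrix N N ℂ} (hX : X.PosSemidef) {s t : ℝ} (hs : 0 < s) (ht : 0 < t)
    (hst : s + t = 1) : mpow X s * mpow X t = X := by
  obtain ⟨U, d, hU1, hU2, hXeq, hd⟩ := posSemidef_exists_cnj hX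
  rw [mpow, mpow, hXeq, matFun_cnj hU1 hU2, matFun_cnj hU1 hU2, cnj_mul hU1]
  refine cnj_congr _ fun i => ?_
  simp only [Pi.mul_apply]
  rcases eq_or_lt_of_le (hd i) with h | h
  · rw [← h, Real.zero_rpow hs.ne', zero_mul]
  · rw [← Real.rpow_add h, hst, Real.rpow_one]

/-- Audenaert's inequality. -/
lemma audenaert {X Y : Matrix N N ℂ} (hX : X.PosSemidef) (hY : Y.PosSemidef)
    {s : ℝ} (hs : s ∈ Set.Ioo (0:ℝ) 1) :
    ((X * (1 - posProj (X - Y))).trace).re + ((Y * posProj (X - Y)).trace).re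
      ≤ ((mpow X s * mpow Y (1 - s)).trace).re := by
  have hs' : (1 - s) ∈ Set.Ioo (0:ℝ) 1 := ⟨by linarith [hs.2], by linarith [hs.1]⟩
  have hT : (X - Y).IsHermitian := hX.1.sub hY.1
  obtain ⟨W, τ, hW1, hW2, hTeq⟩ := isHermitian_exists_cnj hT
  have hP : posProj (X - Y) = cnj W (fun i => if 0 < τ i then 1 else 0) := by
    rw [posProj, hTeq, matFun_cnj hW1 hW2]
  set Tp : Matrix N N ℂ := cnj W (fun i => max (τ i) 0) with hTpdef
  set Tm : Matrix N N ℂ := cnj W (fun i => max (-τ i) 0) with hTmdef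
  have hTp_psd : Tp.PosSemidef := cnj_posSemidef _ fun i => le_max_right _ _
  have hTm_psd : Tm.PosSemidef := cnj_posSemidef _ fun i => le_max_right _ _
  have hTsub : Tp - Tm = X - Y := by
    rw [hTpdef, hTmdef, ← cnj_sub, hTeq]
    refine cnj_congr _ fun i => ?_
    simp only [Pi.sub_apply]
    rcases le_or_gt (τ i) 0 with h | h
    · rw [max_eq_right h, max_eq_left (by linarith)]; ring
    · rw [max_eq_left h.le, max_eq_right (by linarith)]; ring
  have hTP : (X - Y) * posProj (X - Y) = Tp := by
    rw [hP, hTeq, cnj_mul hW1, hTpdef]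
    refine cnj_congr _ fun i => ?_
    simp only [Pi.mul_apply]
    rcases le_or_gt (τ i) 0 with h | h
    · rw [if_neg (not_lt.mpr h), max_eq_right h, mul_zero]
    · rw [if_pos h, max_eq_left h.le, mul_one]
  set a : Matrix N N ℂ := X + Tm with hadef
  have ha : a.PosSemidef := hX.add hTm_psd
  have loXa : (a - X).PosSemidef := by
    rw [hadef, show X + Tm - X = Tm by abel]; exact hTm_psd
  have loYa : (a - Y).PosSemidef := by
    rw [hadef, show X + Tm - Y = (X - Y) + Tm by abel, ← hTsub,
      show Tp - Tm + Tm = Tp by abel]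
    exact hTp_psd
  have LXt := loewner_heinz hX ha loXa hs'
  have LXs := loewner_heinz hX ha loXa hs
  have LYt := loewner_heinz hY ha loYa hs'
  have LYs := loewner_heinz hY ha loYa hs
  -- (1)
  have h1 : (X.trace).re ≤ ((mpow X s * mpow a (1 - s)).trace).re := by
    have := trace_mul_mono_right (mpow_psd hX s) LXt
    rwa [mpow_mul_eq hX hs.1 hs'.1 (by ring)] at this
  -- (3)
  have h3 : (Y.trace).re ≤ ((mpow a s * mpow Y (1 - s)).trace).re := by
    have := trace_mul_mono_right (mpow_psd hY (1 - s)) LYs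
    rw [Matrix.trace_mul_comm (mpow Y (1-s)) (mpow Y s),
      Matrix.trace_mul_comm (mpow Y (1-s)) (mpow a s),
      mpow_mul_eq hY hs.1 hs'.1 (by ring)] at this
    exact this
  -- (2)
  have h2 : ((mpow X s * mpow a (1 - s)).trace).re - ((mpow X s * mpow Y (1 - s)).trace).re
      ≤ ((mpow a s * mpow a (1 - s)).trace).re - ((mpow a s * mpow Y (1 - s)).trace).re := by
    have hM : (mpow a (1 - s) - mpow Y (1 - s)).PosSemidef := LYt
    have := trace_mul_mono_right hM LXs
    rw [Matrix.trace_mul_comm _ (mpow X s), Matrix.trace_mul_comm _ (mpow a s)] at this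
    rw [mul_sub, mul_sub, Matrix.trace_sub, Matrix.trace_sub, Complex.sub_re, Complex.sub_re]
      at this
    linarith
  -- (4)
  have h4 : ((mpow a s * mpow a (1 - s)).trace).re = (a.trace).re := by
    rw [mpow_mul_eq ha hs.1 hs'.1 (by ring)]
  -- traces relation: tr a = tr X + tr Tm, and X - Y = Tp - Tm
  have htr_a : (a.trace).re = (X.trace).re + (Tm.trace).re := by
    rw [hadef, Matrix.trace_add, Complex.add_re]
  have htr_T : (X.trace).re - (Y.trace).re = (Tp.trace).re - (Tm.trace).re := by
    have : (X - Y).trace = Tp.trace - Tm.trace := by rw [← hTsub, Matrix.trace_sub]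
    rw [Matrix.trace_sub] at this
    have := congrArg Complex.re this
    rw [Complex.sub_re, Complex.sub_re] at this
    linarith
  -- LHS rewriting
  have hlhs : ((X * (1 - posProj (X - Y))).trace).re + ((Y * posProj (X - Y)).trace).re
      = (X.trace).re - (Tp.trace).re := by
    have e1 : X * (1 - posProj (X - Y)) = X - X * posProj (X - Y) := by
      rw [mul_sub, mul_one]
    have e2 : X * posProj (X - Y) - Y * posProj (X - Y) = Tp := by
      rw [← sub_mul, hTP]
    have := congrArg Complex.re (congrArg Matrix.trace e2)
    rw [Matrix.trace_sub, Complex.sub_re] at this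
    rw [e1, Matrix.trace_sub, Complex.sub_re]
    linarith
  rw [hlhs]
  -- final chain
  have key : ((mpow X s * mpow Y (1 - s)).trace).re
      ≥ (X.trace).re - ((a.trace).re - (Y.trace).re) := by linarith
  have : (a.trace).re - (Y.trace).re = (Tp.trace).re := by linarith
  linarith

lemma posProj_psd {T : Matrix N N ℂ} (hT : T.IsHermitian) :
    (posProj T).PosSemidef ∧ ((1:Matrix N N ℂ) - posProj T).PosSemidef := by
  obtain ⟨W, τ, hW1, hW2, hTeq⟩ := isHermitian_exists_cnj hT
  have hP : posProj T = cnj W (fun i => if 0 < τ i then 1 else 0) := by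
    rw [posProj, hTeq, matFun_cnj hW1 hW2]
  constructor
  · rw [hP]; exact cnj_posSemidef _ fun i => by split <;> norm_num
  · rw [hP, show (1:Matrix N N ℂ) = cnj W 1 from (cnj_one hW2).symm, ← cnj_sub]
    exact cnj_posSemidef _ fun i => by simp only [Pi.sub_apply, Pi.one_apply]; split <;> norm_num

lemma smul_posSemidef {σ : Matrix N N ℂ} (hσ : σ.PosSemidef) {c : ℝ} (hc : 0 ≤ c) :
    ((c:ℂ) • σ).PosSemidef := by
  obtain ⟨U, d, hU1, hU2, heq, hd⟩ := posSemidef_exists_cnj hσ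
  rw [heq, ← cnj_smul]
  exact cnj_posSemidef _ fun i => mul_nonneg hc (hd i)

lemma mpow_real_smul {σ : Matrix N N ℂ} (hσ : σ.PosSemidef) {c : ℝ} (hc : 0 ≤ c) (t : ℝ) :
    mpow ((c:ℂ) • σ) t = ((c ^ t : ℝ) : ℂ) • mpow σ t := by
  obtain ⟨U, d, hU1, hU2, heq, hd⟩ := posSemidef_exists_cnj hσ
  rw [heq, ← cnj_smul, mpow, mpow, matFun_cnj hU1 hU2, matFun_cnj hU1 hU2, ← cnj_smul]
  refine cnj_congr _ fun i => ?_
  exact Real.mul_rpow hc (hd i)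

lemma tpow_posSemidef {d k : ℕ} {ρ : Matrix (Fin d) (Fin d) ℂ} (hρ : ρ.PosSemidef) :
    (tpow ρ k).PosSemidef := by
  obtain ⟨B, hB⟩ := psd_exists_factor hρ
  have : tpow ρ k = (tpow B k)ᴴ * (tpow B k) := by
    ext a b
    simp only [tpow, Matrix.mul_apply, Matrix.conjTranspose_apply, Matrix.of_apply, hB]
    calc ∏ i, (Bᴴ * B) (a i) (b i)
        = ∏ i, ∑ j, star (B j (a i)) * B j (b i) := by
          refine Finset.prod_congr rfl fun i _ => ?_
          simp [Matrix.mul_apply, Matrix.conjTranspose_apply]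
      _ = ∑ c : Fin k → Fin d, ∏ i, star (B (c i) (a i)) * B (c i) (b i) := by
          rw [Finset.prod_univ_sum]
          rw [Fintype.piFinset_univ]
      _ = ∑ c : Fin k → Fin d, star (∏ i, B (c i) (a i)) * ∏ i, B (c i) (b i) := by
          refine Finset.sum_congr rfl fun c _ => ?_
          rw [Finset.prod_mul_distrib, ← star_prod]
      _ = ∑ c : Fin k → Fin d, star ((tpow B k) c a) * (tpow B k) c b := by
          refine Finset.sum_congr rfl fun c _ => ?_
          simp [tpow]
  rw [this]
  exact Matrix.posSemidef_conjTranspose_mul_self _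

theorem final_bounds {d : ℕ} (k : ℕ) (ρ : Matrix (Fin d) (Fin d) ℂ)
    (σn : Matrix (Fin k → Fin d) (Fin k → Fin d) ℂ)
    (hρ : ρ.PosSemidef) (hσn : σn.PosSemidef)
    (lam s : ℝ) (hs : s ∈ Set.Ioo (0 : ℝ) 1) :
    (((1 - posProj (tpow ρ k - (((2 : ℝ) ^ lam : ℝ) : ℂ) • σn)) * tpow ρ k).trace).re ≤
        (2 : ℝ) ^ ((1 - s) * (lam - petzD2 s (tpow ρ k) σn)) ∧
      ((posProj (tpow ρ k - (((2 : ℝ) ^ lam : ℝ) : ℂ) • σn) * σn).trace).re ≤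
        (2 : ℝ) ^ (-s * lam - (1 - s) * petzD2 s (tpow ρ k) σn) := by
  set X : Matrix (Fin k → Fin d) (Fin k → Fin d) ℂ := tpow ρ k with hXdef
  have hX : X.PosSemidef := tpow_posSemidef hρ
  set c : ℝ := (2:ℝ) ^ lam with hcdef
  have hc : 0 < c := Real.rpow_pos_of_pos two_pos lam
  set Y : Matrix (Fin k → Fin d) (Fin k → Fin d) ℂ := ((c:ℝ):ℂ) • σn with hYdef
  have hY : Y.PosSemidef := smul_posSemidef hσn hc.le
  set P : Matrix (Fin k → Fin d) (Fin k → Fin d) ℂ := posProj (X - Y) with hPdef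
  obtain ⟨hPpsd, h1Ppsd⟩ := posProj_psd (hX.1.sub hY.1)
  set Q : ℝ := ((mpow X s * mpow σn (1 - s)).trace).re with hQdef
  have hQ0 : 0 ≤ Q := trace_mul_psd_re_nonneg (mpow_psd hX s) (mpow_psd hσn (1 - s))
  set D : ℝ := petzD2 s X σn with hDdef
  have hs1 : s - 1 ≠ 0 := by
    have := hs.2; intro h; apply absurd this; simp [show s = 1 by linarith [sub_eq_zero.mp h]]
  have hDQ : (s - 1) * D = Real.logb 2 Q := by
    rw [hDdef, petzD2, ← hQdef]
    field_simp
  have hQkey : Q ≤ (2:ℝ) ^ ((s - 1) * D) := by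
    rcases eq_or_lt_of_le hQ0 with h | h
    · rw [hDQ, ← h, Real.logb_zero, Real.rpow_zero]; linarith
    · rw [hDQ, Real.rpow_logb two_pos (by norm_num) h]
  -- Audenaert
  have hA := audenaert hX hY hs
  -- rewrite RHS of Audenaert
  have hRHS : ((mpow X s * mpow Y (1 - s)).trace).re = c ^ (1 - s) * Q := by
    rw [hYdef, mpow_real_smul hσn hc.le (1 - s), mul_smul_comm, Matrix.trace_smul]
    rw [hQdef, smul_eq_mul, Complex.mul_re, Complex.ofReal_re, Complex.ofReal_im]
    ring
  -- rewrite LHS terms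
  have hL2 : ((Y * P).trace).re = c * ((P * σn).trace).re := by
    rw [hYdef, Matrix.smul_mul, Matrix.trace_smul, Matrix.trace_mul_comm σn P, smul_eq_mul,
      Complex.mul_re, Complex.ofReal_re, Complex.ofReal_im]
    ring
  set L1 : ℝ := (((1 - P) * X).trace).re with hL1def
  set L2 : ℝ := ((P * σn).trace).re with hL2def
  have hL1eq : ((X * (1 - P)).trace).re = L1 := by rw [hL1def, Matrix.trace_mul_comm]
  have hA' : L1 + c * L2 ≤ c ^ (1 - s) * Q := by
    rw [hRHS, hL2, hL1eq] at hA
    exact hA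
  have hL1n : 0 ≤ L1 := by
    rw [hL1def, Matrix.trace_mul_comm]
    exact trace_mul_psd_re_nonneg hX h1Ppsd
  have hL2n : 0 ≤ L2 := by
    rw [hL2def, Matrix.trace_mul_comm]
    exact trace_mul_psd_re_nonneg hσn hPpsd
  have hcs : c ^ (1 - s) = (2:ℝ) ^ (lam * (1 - s)) := by
    rw [hcdef, ← Real.rpow_mul (by norm_num : (0:ℝ) ≤ 2)]
  have hmul : ∀ e1 e2 : ℝ, (2:ℝ) ^ e1 * (2:ℝ) ^ e2 = (2:ℝ) ^ (e1 + e2) := fun e1 e2 =>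
    (Real.rpow_add two_pos e1 e2).symm
  have h2pos : ∀ e : ℝ, (0:ℝ) < (2:ℝ) ^ e := fun e => Real.rpow_pos_of_pos two_pos e
  constructor
  · -- first bound
    have step1 : L1 ≤ c ^ (1 - s) * Q := by nlinarith [mul_nonneg hc.le hL2n]
    have step2 : c ^ (1 - s) * Q ≤ c ^ (1 - s) * (2:ℝ) ^ ((s - 1) * D) :=
      mul_le_mul_of_nonneg_left hQkey (by positivity)
    have step3 : c ^ (1 - s) * (2:ℝ) ^ ((s - 1) * D) = (2:ℝ) ^ ((1 - s) * (lam - D)) := by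
      rw [hcs, hmul]
      congr 1
      ring
    calc L1 ≤ c ^ (1 - s) * Q := step1
      _ ≤ c ^ (1 - s) * (2:ℝ) ^ ((s - 1) * D) := step2
      _ = (2:ℝ) ^ ((1 - s) * (lam - D)) := step3
  · -- second bound
    have step1 : c * L2 ≤ c ^ (1 - s) * Q := by nlinarith [hL1n]
    have step2 : L2 ≤ c ^ (1 - s) * Q / c := by
      rw [le_div_iff₀ hc]
      nlinarith
    have step3 : c ^ (1 - s) * Q / c = ((2:ℝ) ^ (lam * (1 - s) - lam)) * Q := by
      have hsub : (2:ℝ) ^ (lam * (1 - s) - lam) = (2:ℝ) ^ (lam * (1 - s)) / (2:ℝ) ^ lam :=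
        Real.rpow_sub two_pos _ _
      rw [hcs, hcdef, hsub]
      ring
    have step4 : ((2:ℝ) ^ (lam * (1 - s) - lam)) * Q
        ≤ ((2:ℝ) ^ (lam * (1 - s) - lam)) * (2:ℝ) ^ ((s - 1) * D) :=
      mul_le_mul_of_nonneg_left hQkey (h2pos _).le
    have step5 : ((2:ℝ) ^ (lam * (1 - s) - lam)) * (2:ℝ) ^ ((s - 1) * D)
        = (2:ℝ) ^ (-s * lam - (1 - s) * D) := by
      rw [hmul]
      congr 1
      ring
    calc L2 ≤ c ^ (1 - s) * Q / c := step2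
      _ = ((2:ℝ) ^ (lam * (1 - s) - lam)) * Q := step3
      _ ≤ ((2:ℝ) ^ (lam * (1 - s) - lam)) * (2:ℝ) ^ ((s - 1) * D) := step4
      _ = (2:ℝ) ^ (-s * lam - (1 - s) * D) := step5


end AuxNeymanPearson

/-- Error bounds for the Neyman–Pearson-type test `M = {ρ^{⊗n} - 2^λ σₙ}₊`:
`tr[(1-M)ρ^{⊗n}] ≤ 2^{(1-s)(λ - D_s(ρ^{⊗n}‖σₙ))}` and
`tr[M σₙ] ≤ 2^{-sλ - (1-s) D_s(ρ^{⊗n}‖σₙ)}`. -/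
theorem neyman_pearson_petz_bounds {d : ℕ} (k : ℕ) (ρ : Matrix (Fin d) (Fin d) ℂ)
    (σn : Matrix (Fin k → Fin d) (Fin k → Fin d) ℂ)
    (hρ : IsDensity ρ) (hσn : IsDensity σn)
    (lam s : ℝ) (hs : s ∈ Set.Ioo (0 : ℝ) 1) :
    (((1 - posProj (tpow ρ k - (((2 : ℝ) ^ lam : ℝ) : ℂ) • σn)) * tpow ρ k).trace).re ≤
        (2 : ℝ) ^ ((1 - s) * (lam - petzD2 s (tpow ρ k) σn)) ∧
      ((posProj (tpow ρ k - (((2 : ℝ) ^ lam : ℝ) : ℂ) • σn) * σn).trace).re ≤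
        (2 : ℝ) ^ (-s * lam - (1 - s) * petzD2 s (tpow ρ k) σn) := by
  exact final_bounds k ρ σn hρ.1 hσn.1 lam s hs
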